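/- Assume m > 1. Let U₁, U₂ : (0,∞) → [0,∞) be continuous profile solutions, each with bounded support. If U₁(z₀) < U₂(z₀) for some z₀ > 0, then for every z > 0 either U₁(z) < U₂(z) or U₁(z) = U₂(z) = 0. -/

import Mathlib

open MeasureTheory Set Filter

/-- The kernel profile `Q(η) = (1/Γ(1-α)) ∫_η^1 (1-σ^{1/b})^{-α} σ^{1-d} dσ` for
`η ∈ (0,1)`; for `η ≥ 1` the interval `(η,1)` is empty, so `Q(η) = 0`. -/
noncomputable def Qker (d : ℕ) (α b : ℝ) (η : ℝ) : ℝ :=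
  (1 / Real.Gamma (1 - α)) *
    ∫ σ in Set.Ioo η 1, (1 - σ ^ (1 / b)) ^ (-α) * σ ^ (1 - (d:ℝ))

/-- The kernel `K(z,ρ) = ρ·Q(z/ρ)`. -/
noncomputable def Kker (d : ℕ) (α b : ℝ) (z ρ : ℝ) : ℝ := ρ * Qker d α b (z / ρ)

/-- A profile solution: `U : (0,∞) → [0,∞)` with, for every `z > 0`,
`ρ ↦ K(z,ρ)·U(ρ)` integrable on `(z,∞)` and `U(z)^m = ∫_z^∞ K(z,ρ)·U(ρ) dρ`. -/
def IsProfileSolution (d : ℕ) (α b m : ℝ) (U : ℝ → ℝ) : Prop :=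
  (∀ z, 0 < z → 0 ≤ U z) ∧
  ∀ z, 0 < z →
    MeasureTheory.IntegrableOn (fun ρ => Kker d α b z ρ * U ρ) (Set.Ioi z) ∧
    U z ^ m = ∫ ρ in Set.Ioi z, Kker d α b z ρ * U ρ

section Kernel

variable {d : ℕ} {α b m : ℝ}

lemma b_pos (hα : α ∈ Set.Ioo (0:ℝ) 1) (hm : 1 < m)
    (hb : b = α / (2 + (d:ℝ) * (m - 1))) : 0 < b := by
  have h2 : (0:ℝ) < 2 + (d:ℝ) * (m - 1) := by
    have : (0:ℝ) ≤ (d:ℝ) * (m - 1) := mul_nonneg (Nat.cast_nonneg d) (by linarith)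
    linarith
  rw [hb]; exact div_pos hα.1 h2

lemma one_le_inv_b (hα : α ∈ Set.Ioo (0:ℝ) 1) (hm : 1 < m)
    (hb : b = α / (2 + (d:ℝ) * (m - 1))) : 1 ≤ 1 / b := by
  have hbpos := b_pos hα hm hb
  rw [le_div_iff₀ hbpos, one_mul, hb]
  have h0 : (0:ℝ) ≤ (d:ℝ) * (m - 1) := mul_nonneg (Nat.cast_nonneg d) (by linarith)
  have h2 : (0:ℝ) < 2 + (d:ℝ) * (m - 1) := by linarith
  rw [div_le_one h2]
  have := hα.2
  linarith

/-- the integrand of `Qker` -/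
noncomputable def qint (d : ℕ) (α b σ : ℝ) : ℝ := (1 - σ ^ (1 / b)) ^ (-α) * σ ^ (1 - (d:ℝ))

lemma qint_pos (hα : α ∈ Set.Ioo (0:ℝ) 1) (hbpos : 0 < b) {σ : ℝ}
    (h0 : 0 < σ) (h1 : σ < 1) : 0 < qint d α b σ := by
  have h : σ ^ (1 / b) < 1 :=
    Real.rpow_lt_one h0.le h1 (by positivity)
  have : (0:ℝ) < 1 - σ ^ (1 / b) := by linarith
  exact mul_pos (Real.rpow_pos_of_pos this _) (Real.rpow_pos_of_pos h0 _)

lemma qint_le (hd : 1 ≤ d) (hα : α ∈ Set.Ioo (0:ℝ) 1) (hm : 1 < m)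
    (hb : b = α / (2 + (d:ℝ) * (m - 1))) {η σ : ℝ} (hη : 0 < η)
    (h0 : η ≤ σ) (h1 : σ < 1) :
    qint d α b σ ≤ (1 - σ) ^ (-α) * η ^ (1 - (d:ℝ)) := by
  have hσ0 : 0 < σ := lt_of_lt_of_le hη h0
  have h1b := one_le_inv_b hα hm hb
  have hrle : σ ^ (1 / b) ≤ σ := by
    have := Real.rpow_le_rpow_of_exponent_ge hσ0 h1.le h1b
    rwa [Real.rpow_one] at this
  have hpos : (0:ℝ) < 1 - σ := by linarith
  have f1 : (1 - σ ^ (1/b)) ^ (-α) ≤ (1 - σ) ^ (-α) :=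
    Real.rpow_le_rpow_of_nonpos hpos (by linarith) (by linarith [hα.1])
  have f2 : σ ^ (1 - (d:ℝ)) ≤ η ^ (1 - (d:ℝ)) := by
    apply Real.rpow_le_rpow_of_nonpos hη h0
    have : (1:ℝ) ≤ (d:ℝ) := by exact_mod_cast hd
    linarith
  calc qint d α b σ ≤ (1 - σ) ^ (-α) * σ ^ (1 - (d:ℝ)) := by
        apply mul_le_mul_of_nonneg_right f1 (Real.rpow_nonneg hσ0.le _)
    _ ≤ (1 - σ) ^ (-α) * η ^ (1 - (d:ℝ)) := by
        apply mul_le_mul_of_nonneg_left f2 (Real.rpow_nonneg hpos.le _)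

end Kernel
section Kernel2

variable {d : ℕ} {α b m : ℝ}

lemma qint_continuousOn (hα : α ∈ Set.Ioo (0:ℝ) 1) (hbpos : 0 < b) {η : ℝ} (hη : 0 < η) :
    ContinuousOn (qint d α b) (Set.Ioo η 1) := by
  unfold qint
  apply ContinuousOn.mul
  · apply ContinuousOn.rpow_const
    · apply ContinuousOn.sub continuousOn_const
      apply ContinuousOn.rpow_const continuousOn_id
      intro σ hσ
      exact Or.inl (ne_of_gt (lt_trans hη hσ.1))
    · intro σ hσ
      refine Or.inl (ne_of_gt ?_)
      have h : σ ^ (1 / b) < 1 :=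
        Real.rpow_lt_one (lt_trans hη hσ.1).le hσ.2 (by positivity)
      linarith
  · apply ContinuousOn.rpow_const continuousOn_id
    intro σ hσ
    exact Or.inl (ne_of_gt (lt_trans hη hσ.1))

lemma integrable_one_sub_rpow (hα : α ∈ Set.Ioo (0:ℝ) 1) {η : ℝ} :
    IntegrableOn (fun σ : ℝ => (1 - σ) ^ (-α)) (Set.Ioo η 1) := by
  have h : IntervalIntegrable (fun x : ℝ => x ^ (-α)) volume 0 (1 - η) :=
    intervalIntegral.intervalIntegrable_rpow' (by linarith [hα.2])
  have h2 : IntervalIntegrable (fun x : ℝ => (1 - x) ^ (-α)) volume η 1 := by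
    have := (h.comp_sub_left 1).symm
    simpa using this
  rcases le_or_gt 1 η with hη | hη
  · rw [Set.Ioo_eq_empty (by linarith)]
    exact integrableOn_empty
  · have := (intervalIntegrable_iff_integrableOn_Ioo_of_le hη.le).mp h2
    exact this

lemma qint_integrableOn (hd : 1 ≤ d) (hα : α ∈ Set.Ioo (0:ℝ) 1) (hm : 1 < m)
    (hb : b = α / (2 + (d:ℝ) * (m - 1))) {η : ℝ} (hη : 0 < η) :
    IntegrableOn (qint d α b) (Set.Ioo η 1) := by
  have hbound : IntegrableOn (fun σ : ℝ => η ^ (1 - (d:ℝ)) * (1 - σ) ^ (-α)) (Set.Ioo η 1) :=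
    (integrable_one_sub_rpow hα).const_mul _
  have hmeas : AEStronglyMeasurable (qint d α b) (volume.restrict (Set.Ioo η 1)) := by
    rcases le_or_gt 1 η with h1 | h1
    · rw [Set.Ioo_eq_empty (by linarith)]
      simp [Measure.restrict_empty]
    · exact (qint_continuousOn hα (b_pos hα hm hb) hη).aestronglyMeasurable measurableSet_Ioo
  apply Integrable.mono' hbound hmeas
  rw [ae_restrict_iff' measurableSet_Ioo]
  refine ae_of_all _ fun σ hσ => ?_
  rw [Real.norm_eq_abs, abs_of_nonneg]
  · rw [mul_comm]
    exact qint_le hd hα hm hb hη hσ.1.le hσ.2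
  · exact (qint_pos hα (b_pos hα hm hb) (lt_trans hη hσ.1) hσ.2).le

lemma Qker_eq (η : ℝ) :
    Qker d α b η = (1 / Real.Gamma (1 - α)) * ∫ σ in Set.Ioo η 1, qint d α b σ := rfl

lemma Gamma_inv_pos (hα : α ∈ Set.Ioo (0:ℝ) 1) : 0 < 1 / Real.Gamma (1 - α) := by
  have := Real.Gamma_pos_of_pos (by linarith [hα.2] : (0:ℝ) < 1 - α)
  positivity

lemma Qker_pos (hd : 1 ≤ d) (hα : α ∈ Set.Ioo (0:ℝ) 1) (hm : 1 < m)
    (hb : b = α / (2 + (d:ℝ) * (m - 1))) {η : ℝ} (h0 : 0 < η) (h1 : η < 1) :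
    0 < Qker d α b η := by
  rw [Qker_eq]
  apply mul_pos (Gamma_inv_pos hα)
  have hne : 0 ≤ᵐ[volume.restrict (Set.Ioo η 1)] qint d α b :=
    (ae_restrict_iff' measurableSet_Ioo).mpr (ae_of_all _ fun σ hσ =>
      (qint_pos hα (b_pos hα hm hb) (lt_trans h0 hσ.1) hσ.2).le)
  rw [setIntegral_pos_iff_support_of_nonneg_ae hne (qint_integrableOn hd hα hm hb h0)]
  have hsub : Set.Ioo η 1 ⊆ Function.support (qint d α b) ∩ Set.Ioo η 1 := by
    intro σ hσ
    exact ⟨(qint_pos hα (b_pos hα hm hb) (lt_trans h0 hσ.1) hσ.2).ne', hσ⟩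
  calc (0:ENNReal) < volume (Set.Ioo η 1) := by
        rw [Real.volume_Ioo]
        rw [ENNReal.ofReal_pos]
        linarith
    _ ≤ _ := measure_mono hsub

lemma Qker_nonneg (hd : 1 ≤ d) (hα : α ∈ Set.Ioo (0:ℝ) 1) (hm : 1 < m)
    (hb : b = α / (2 + (d:ℝ) * (m - 1))) {η : ℝ} (h0 : 0 < η) :
    0 ≤ Qker d α b η := by
  rcases lt_or_ge η 1 with h1 | h1
  · exact (Qker_pos hd hα hm hb h0 h1).le
  · rw [Qker_eq, Set.Ioo_eq_empty (by linarith)]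
    simp

lemma Qker_anti (hd : 1 ≤ d) (hα : α ∈ Set.Ioo (0:ℝ) 1) (hm : 1 < m)
    (hb : b = α / (2 + (d:ℝ) * (m - 1))) {η₁ η₂ : ℝ} (h0 : 0 < η₁) (h12 : η₁ ≤ η₂) :
    Qker d α b η₂ ≤ Qker d α b η₁ := by
  rcases le_or_gt 1 η₂ with h1 | h1
  · have : Qker d α b η₂ = 0 := by
      rw [Qker_eq, Set.Ioo_eq_empty (by linarith)]; simp
    rw [this]
    exact Qker_nonneg hd hα hm hb h0
  · rw [Qker_eq, Qker_eq]
    apply mul_le_mul_of_nonneg_left _ (Gamma_inv_pos hα).le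
    apply setIntegral_mono_set (qint_integrableOn hd hα hm hb h0)
    · exact (ae_restrict_iff' measurableSet_Ioo).mpr (ae_of_all _ fun σ hσ =>
        (qint_pos hα (b_pos hα hm hb) (lt_trans h0 hσ.1) hσ.2).le)
    · exact HasSubset.Subset.eventuallyLE (Set.Ioo_subset_Ioo_left h12)

lemma Kker_pos (hd : 1 ≤ d) (hα : α ∈ Set.Ioo (0:ℝ) 1) (hm : 1 < m)
    (hb : b = α / (2 + (d:ℝ) * (m - 1))) {z ρ : ℝ} (h0 : 0 < z) (h1 : z < ρ) :
    0 < Kker d α b z ρ := by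
  have hρ : 0 < ρ := lt_trans h0 h1
  exact mul_pos hρ (Qker_pos hd hα hm hb (div_pos h0 hρ) ((div_lt_one hρ).mpr h1))

lemma Kker_nonneg (hd : 1 ≤ d) (hα : α ∈ Set.Ioo (0:ℝ) 1) (hm : 1 < m)
    (hb : b = α / (2 + (d:ℝ) * (m - 1))) {z ρ : ℝ} (h0 : 0 < z) (h1 : z < ρ) :
    0 ≤ Kker d α b z ρ := (Kker_pos hd hα hm hb h0 h1).le

lemma Kker_anti (hd : 1 ≤ d) (hα : α ∈ Set.Ioo (0:ℝ) 1) (hm : 1 < m)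
    (hb : b = α / (2 + (d:ℝ) * (m - 1))) {z z' ρ : ℝ} (h0 : 0 < z) (hzz : z ≤ z')
    (h1 : z' < ρ) : Kker d α b z' ρ ≤ Kker d α b z ρ := by
  have hρ : 0 < ρ := lt_trans (lt_of_lt_of_le h0 hzz) h1
  unfold Kker
  apply mul_le_mul_of_nonneg_left _ hρ.le
  exact Qker_anti hd hα hm hb (div_pos h0 hρ) (by gcongr)

end Kernel2
section Sol

variable {d : ℕ} {α b m : ℝ}

lemma pow_reflect {x y : ℝ} (hy : 0 ≤ y) (hm0 : 0 < m) (h : x ^ m ≤ y ^ m) : x ≤ y := by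
  by_contra hc
  push_neg at hc
  exact absurd h (not_le.mpr (Real.rpow_lt_rpow hy hc hm0))

lemma pow_reflect_lt {x y : ℝ} (hy : 0 ≤ y) (hm0 : 0 ≤ m) (h : x ^ m < y ^ m) : x < y := by
  by_contra hc
  push_neg at hc
  exact absurd h (not_lt.mpr (Real.rpow_le_rpow hy hc hm0))

lemma sol_anti (hd : 1 ≤ d) (hα : α ∈ Set.Ioo (0:ℝ) 1) (hm : 1 < m)
    (hb : b = α / (2 + (d:ℝ) * (m - 1))) {U : ℝ → ℝ}
    (hsol : IsProfileSolution d α b m U) {z z' : ℝ} (h0 : 0 < z) (hzz : z ≤ z') :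
    U z' ≤ U z := by
  rcases eq_or_lt_of_le hzz with rfl | hlt
  · exact le_refl _
  have h0' : 0 < z' := lt_trans h0 hlt
  obtain ⟨hint, heq⟩ := hsol.2 z h0
  obtain ⟨hint', heq'⟩ := hsol.2 z' h0'
  have s1 : ∫ ρ in Set.Ioi z', Kker d α b z ρ * U ρ ≤ ∫ ρ in Set.Ioi z, Kker d α b z ρ * U ρ := by
    apply setIntegral_mono_set hint
    · exact (ae_restrict_iff' measurableSet_Ioi).mpr (ae_of_all _ fun ρ hρ =>
        mul_nonneg (Kker_nonneg hd hα hm hb h0 hρ) (hsol.1 ρ (lt_trans h0 hρ)))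
    · exact HasSubset.Subset.eventuallyLE (Set.Ioi_subset_Ioi hzz)
  have s2 : ∫ ρ in Set.Ioi z', Kker d α b z' ρ * U ρ ≤ ∫ ρ in Set.Ioi z', Kker d α b z ρ * U ρ := by
    apply setIntegral_mono_on (hint'.mono_set (le_refl _)) (hint.mono_set (Set.Ioi_subset_Ioi hzz))
      measurableSet_Ioi
    intro ρ hρ
    exact mul_le_mul_of_nonneg_right (Kker_anti hd hα hm hb h0 hzz hρ)
      (hsol.1 ρ (lt_trans h0' hρ))
  apply pow_reflect (hsol.1 z h0) (by linarith : (0:ℝ) < m)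
  rw [heq, heq']
  exact le_trans s2 s1

/-- the right edge of the support -/
noncomputable def Zedge (U : ℝ → ℝ) : ℝ := sSup {z : ℝ | 0 < z ∧ U z ≠ 0}

lemma zero_after {U : ℝ → ℝ} (hbd : Bornology.IsBounded {z : ℝ | 0 < z ∧ U z ≠ 0})
    {z : ℝ} (hz : 0 < z) (hZ : Zedge U < z) : U z = 0 := by
  by_contra h
  have : z ∈ {z : ℝ | 0 < z ∧ U z ≠ 0} := ⟨hz, h⟩
  have := le_csSup hbd.bddAbove this
  rw [Zedge] at hZ
  linarith

lemma pos_before (hd : 1 ≤ d) (hα : α ∈ Set.Ioo (0:ℝ) 1) (hm : 1 < m)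
    (hb : b = α / (2 + (d:ℝ) * (m - 1))) {U : ℝ → ℝ}
    (hsol : IsProfileSolution d α b m U) {z : ℝ} (hz : 0 < z) (hZ : z < Zedge U) :
    0 < U z := by
  have hne : {z : ℝ | 0 < z ∧ U z ≠ 0}.Nonempty := by
    by_contra h
    rw [Set.not_nonempty_iff_eq_empty] at h
    rw [Zedge, h, Real.sSup_empty] at hZ
    linarith
  obtain ⟨y, hy, hzy⟩ := exists_lt_of_lt_csSup hne hZ
  have hUy : 0 < U y := lt_of_le_of_ne (hsol.1 y hy.1) (Ne.symm hy.2)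
  exact lt_of_lt_of_le hUy (sol_anti hd hα hm hb hsol hz hzy.le)

end Sol
section Core

variable {d : ℕ} {α b m : ℝ}

lemma key_lemma (hd : 1 ≤ d) (hα : α ∈ Set.Ioo (0:ℝ) 1) (hm : 1 < m)
    (hb : b = α / (2 + (d:ℝ) * (m - 1))) {U V : ℝ → ℝ}
    (hsolU : IsProfileSolution d α b m U) (hsolV : IsProfileSolution d α b m V)
    (hbdU : Bornology.IsBounded {z : ℝ | 0 < z ∧ U z ≠ 0})
    (hZ : Zedge U < Zedge V) {z : ℝ} (hz : 0 < z) (hzV : z < Zedge V)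
    (hord : ∀ ρ, z < ρ → U ρ ≤ V ρ) : U z < V z := by
  obtain ⟨hintU, heqU⟩ := hsolU.2 z hz
  obtain ⟨hintV, heqV⟩ := hsolV.2 z hz
  set g : ℝ → ℝ := fun ρ => Kker d α b z ρ * V ρ - Kker d α b z ρ * U ρ with hg
  have hint : IntegrableOn g (Set.Ioi z) := hintV.sub hintU
  have hnn : 0 ≤ᵐ[volume.restrict (Set.Ioi z)] g :=
    (ae_restrict_iff' measurableSet_Ioi).mpr (ae_of_all _ fun ρ hρ => by
      have := mul_le_mul_of_nonneg_left (hord ρ hρ) (Kker_nonneg hd hα hm hb hz hρ)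
      simp only [hg, Pi.zero_apply]
      linarith)
  have hIlt : max z (Zedge U) < Zedge V := max_lt hzV hZ
  have hpos : 0 < ∫ ρ in Set.Ioi z, g ρ := by
    rw [setIntegral_pos_iff_support_of_nonneg_ae hnn hint]
    have hsub : Set.Ioo (max z (Zedge U)) (Zedge V) ⊆ Function.support g ∩ Set.Ioi z := by
      intro ρ hρ
      have hρz : z < ρ := lt_of_le_of_lt (le_max_left _ _) hρ.1
      have hρ0 : 0 < ρ := lt_trans hz hρz
      have hU0 : U ρ = 0 := zero_after hbdU hρ0 (lt_of_le_of_lt (le_max_right _ _) hρ.1)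
      have hV0 : 0 < V ρ := pos_before hd hα hm hb hsolV hρ0 hρ.2
      have : 0 < g ρ := by
        simp only [hg, hU0, mul_zero, sub_zero]
        exact mul_pos (Kker_pos hd hα hm hb hz hρz) hV0
      exact ⟨this.ne', hρz⟩
    calc (0:ENNReal) < volume (Set.Ioo (max z (Zedge U)) (Zedge V)) := by
          rw [Real.volume_Ioo, ENNReal.ofReal_pos]; linarith
      _ ≤ _ := measure_mono hsub
  have hsubint : ∫ ρ in Set.Ioi z, g ρ
      = (∫ ρ in Set.Ioi z, Kker d α b z ρ * V ρ) - ∫ ρ in Set.Ioi z, Kker d α b z ρ * U ρ :=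
    integral_sub hintV hintU
  apply pow_reflect_lt (hsolV.1 z hz) (by linarith : (0:ℝ) ≤ m)
  rw [heqU, heqV]
  rw [hsubint] at hpos
  linarith

lemma core_lemma (hd : 1 ≤ d) (hα : α ∈ Set.Ioo (0:ℝ) 1) (hm : 1 < m)
    (hb : b = α / (2 + (d:ℝ) * (m - 1))) {U V : ℝ → ℝ}
    (hsolU : IsProfileSolution d α b m U) (hsolV : IsProfileSolution d α b m V)
    (hcU : ContinuousOn U (Set.Ioi 0)) (hcV : ContinuousOn V (Set.Ioi 0))
    (hbdU : Bornology.IsBounded {z : ℝ | 0 < z ∧ U z ≠ 0})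
    (hZ : Zedge U < Zedge V) :
    (∀ z, 0 < z → U z ≤ V z) ∧ (∀ z, 0 < z → z < Zedge V → U z < V z) := by
  have hle : ∀ z, 0 < z → U z ≤ V z := by
    by_contra hcon
    push_neg at hcon
    obtain ⟨w, hw0, hw⟩ := hcon
    set D : Set ℝ := {z : ℝ | 0 < z ∧ V z < U z} with hD
    have hDne : D.Nonempty := ⟨w, hw0, hw⟩
    have hDsub : D ⊆ {z : ℝ | 0 < z ∧ U z ≠ 0} := by
      intro z hz
      exact ⟨hz.1, by have := hsolV.1 z hz.1; have := hz.2; intro h; rw [h] at this; linarith⟩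
    have hDbdd : BddAbove D := hbdU.bddAbove.mono hDsub
    set Z' : ℝ := sSup D with hZ'
    have hZ'pos : 0 < Z' := lt_of_lt_of_le hw0 (le_csSup hDbdd ⟨hw0, hw⟩)
    have hZ'le : Z' ≤ Zedge U :=
      csSup_le hDne fun z hz => le_csSup hbdU.bddAbove (hDsub hz)
    have hZ'V : Z' < Zedge V := lt_of_le_of_lt hZ'le hZ
    have hordZ' : ∀ ρ, Z' < ρ → U ρ ≤ V ρ := by
      intro ρ hρ
      by_contra hcc
      push_neg at hcc
      have : ρ ∈ D := ⟨lt_trans hZ'pos hρ, hcc⟩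
      exact absurd (le_csSup hDbdd this) (not_le.mpr hρ)
    set P : Set ℝ := {t : ℝ | 0 < t ∧ t ≤ Z' ∧ ∀ s, t ≤ s → s ≤ Z' → U s < V s} with hP
    have hZ'P : Z' ∈ P := by
      refine ⟨hZ'pos, le_refl _, fun s h1 h2 => ?_⟩
      have : s = Z' := le_antisymm h2 h1
      subst this
      exact key_lemma hd hα hm hb hsolU hsolV hbdU hZ hZ'pos hZ'V hordZ'
    have hPne : P.Nonempty := ⟨Z', hZ'P⟩
    have hPbdd : BddBelow P := ⟨0, fun t ht => ht.1.le⟩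
    set T : ℝ := sInf P with hT
    have hT0 : 0 ≤ T := le_csInf hPne fun t ht => ht.1.le
    have hTZ' : T ≤ Z' := csInf_le hPbdd hZ'P
    have hTint : ∀ s, T < s → s ≤ Z' → U s < V s := by
      intro s h1 h2
      obtain ⟨t, htP, hts⟩ := exists_lt_of_csInf_lt hPne h1
      exact htP.2.2 s hts.le h2
    rcases eq_or_lt_of_le hT0 with hT0' | hT0'
    · obtain ⟨w', hw'⟩ := hDne
      have : U w' < V w' := hTint w' (by rw [← hT0']; exact hw'.1) (le_csSup hDbdd hw')
      exact absurd this (not_lt.mpr hw'.2.le)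
    · -- 0 < T
      have hordT : ∀ ρ, T < ρ → U ρ ≤ V ρ := by
        intro ρ hρ
        rcases le_or_gt ρ Z' with h | h
        · exact (hTint ρ hρ h).le
        · exact hordZ' ρ h
      have hUT : U T < V T :=
        key_lemma hd hα hm hb hsolU hsolV hbdU hZ hT0' (lt_of_le_of_lt hTZ' hZ'V) hordT
      have hWc : ContinuousAt (fun x => V x - U x) T :=
        ((hcV.sub hcU).continuousAt (Ioi_mem_nhds hT0'))
      have hev : (fun x => V x - U x) ⁻¹' Set.Ioi 0 ∈ nhds T :=
        hWc.preimage_mem_nhds (Ioi_mem_nhds (by linarith))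
      obtain ⟨ε, hε, hball⟩ := Metric.mem_nhds_iff.mp hev
      set δ : ℝ := min (ε/2) (T/2) with hδ
      have hδ0 : 0 < δ := lt_min (by linarith) (by linarith)
      have hTδP : T - δ ∈ P := by
        refine ⟨by
          have : δ ≤ T/2 := min_le_right _ _
          linarith, by linarith, fun s h1 h2 => ?_⟩
        rcases lt_or_ge T s with h | h
        · exact hTint s h h2
        · have : s ∈ Metric.ball T ε := by
            rw [Metric.mem_ball, Real.dist_eq, abs_sub_lt_iff]
            have : δ ≤ ε/2 := min_le_left _ _
            constructor <;> linarith
          have := hball this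
          simp only [Set.mem_preimage, Set.mem_Ioi] at this
          linarith
      have := csInf_le hPbdd hTδP
      rw [← hT] at this
      linarith
  refine ⟨hle, fun z hz hzV => ?_⟩
  exact key_lemma hd hα hm hb hsolU hsolV hbdU hZ hz hzV fun ρ hρ => hle ρ (lt_trans hz hρ)

end Core
section Scale

variable {d : ℕ} {α b m : ℝ}

set_option maxHeartbeats 1000000 in
lemma scaled_sol (hm : 1 < m) {U : ℝ → ℝ}
    (hsol : IsProfileSolution d α b m U) {lam : ℝ} (hlam : 0 < lam) :
    IsProfileSolution d α b m (fun z => lam ^ (-(2/(m-1))) * U (lam * z)) := by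
  set c : ℝ := -(2/(m-1)) with hc
  have hm1 : m - 1 ≠ 0 := by intro h; linarith [hm]
  constructor
  · intro z hz
    exact mul_nonneg (Real.rpow_nonneg hlam.le _) (hsol.1 _ (by positivity))
  intro z hz
  have hz' : 0 < lam * z := by positivity
  obtain ⟨hint, heq⟩ := hsol.2 (lam * z) hz'
  have hKid : ∀ ρ : ℝ, Kker d α b z ρ = lam⁻¹ * Kker d α b (lam*z) (lam*ρ) := by
    intro ρ
    unfold Kker
    rw [mul_div_mul_left z ρ (ne_of_gt hlam)]
    field_simp
  have hfeq : (fun ρ => Kker d α b z ρ * (lam ^ c * U (lam * ρ)))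
      = fun ρ => (lam⁻¹ * lam ^ c) *
          ((fun s => Kker d α b (lam*z) s * U s) (lam * ρ)) := by
    funext ρ
    rw [hKid ρ]
    ring
  have hint2 : IntegrableOn (fun ρ => (fun s => Kker d α b (lam*z) s * U s) (lam * ρ))
      (Set.Ioi z) := (integrableOn_Ioi_comp_mul_left_iff _ z hlam).mpr hint
  constructor
  · exact hfeq ▸ hint2.const_mul _
  · show (lam ^ c * U (lam * z)) ^ m = _
    rw [hfeq, integral_const_mul,
      integral_comp_mul_left_Ioi (fun s => Kker d α b (lam*z) s * U s) z hlam,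
      ← heq, smul_eq_mul]
    have h1 : (lam ^ c * U (lam * z)) ^ m = lam ^ (c * m) * U (lam * z) ^ m := by
      rw [Real.mul_rpow (Real.rpow_nonneg hlam.le _) (hsol.1 _ hz'),
        Real.rpow_mul hlam.le c m]
    have h2 : c * m = c + (-1) + (-1) := by
      rw [hc]
      field_simp
      ring
    have h3 : lam ^ (c*m) = lam⁻¹ * lam ^ c * lam⁻¹ := by
      rw [h2, Real.rpow_add hlam, Real.rpow_add hlam, Real.rpow_neg_one]
      ring
    rw [h1, h3]
    ring

end Scale
section Final

variable {d : ℕ} {α b m : ℝ}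

lemma edge_le_imp_le (hd : 1 ≤ d) (hα : α ∈ Set.Ioo (0:ℝ) 1) (hm : 1 < m)
    (hb : b = α / (2 + (d:ℝ) * (m - 1))) {A B : ℝ → ℝ}
    (hsolA : IsProfileSolution d α b m A) (hsolB : IsProfileSolution d α b m B)
    (hcA : ContinuousOn A (Set.Ioi 0)) (hcB : ContinuousOn B (Set.Ioi 0))
    (hbdA : Bornology.IsBounded {z : ℝ | 0 < z ∧ A z ≠ 0})
    (hbdB : Bornology.IsBounded {z : ℝ | 0 < z ∧ B z ≠ 0})
    (hBne : {z : ℝ | 0 < z ∧ B z ≠ 0}.Nonempty)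
    (hZ : Zedge A ≤ Zedge B) :
    ∀ z, 0 < z → A z ≤ B z := by
  set c : ℝ := -(2/(m-1)) with hc
  intro z hz
  have hstep : ∀ lam : ℝ, 0 < lam → lam < 1 → A z ≤ lam ^ c * B (lam * z) := by
    intro lam h0 h1
    have hsolV := scaled_sol hm hsolB h0
    set V : ℝ → ℝ := fun y => lam ^ c * B (lam * y) with hV
    obtain ⟨R, hR⟩ := hbdB.bddAbove
    have hbddV : BddAbove {y : ℝ | 0 < y ∧ V y ≠ 0} := by
      refine ⟨R / lam, fun y hy => ?_⟩
      have h2 : B (lam * y) ≠ 0 := by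
        intro h
        exact hy.2 (by simp [hV, h])
      have h3 : lam * y ∈ {z : ℝ | 0 < z ∧ B z ≠ 0} := ⟨mul_pos h0 hy.1, h2⟩
      have h4 := hR h3
      rw [le_div_iff₀ h0]
      linarith [mul_comm lam y]
    have hmemV : ∀ y ∈ {z : ℝ | 0 < z ∧ B z ≠ 0}, y / lam ∈ {y : ℝ | 0 < y ∧ V y ≠ 0} := by
      intro y hy
      refine ⟨div_pos hy.1 h0, ?_⟩
      have : lam * (y / lam) = y := by
        field_simp
      rw [hV]
      simp only
      rw [this]
      exact mul_ne_zero (Real.rpow_pos_of_pos h0 c).ne' hy.2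
    have hZV : Zedge A < Zedge V := by
      have h3 : Zedge B ≤ lam * Zedge V := by
        apply csSup_le hBne
        intro y hy
        have h5 : y / lam ≤ Zedge V := le_csSup hbddV (hmemV y hy)
        rw [div_le_iff₀ h0] at h5
        linarith [mul_comm lam (Zedge V)]
      have hZVpos : 0 < Zedge V := by
        obtain ⟨y, hy⟩ := hBne
        exact lt_of_lt_of_le (div_pos hy.1 h0) (le_csSup hbddV (hmemV y hy))
      calc Zedge A ≤ Zedge B := hZ
        _ ≤ lam * Zedge V := h3
        _ < Zedge V := by nlinarith
    have hVc : ContinuousOn V (Set.Ioi 0) := by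
      apply ContinuousOn.mul continuousOn_const
      apply hcB.comp ((continuous_const.mul continuous_id).continuousOn)
      intro y hy
      exact mul_pos h0 hy
    exact (core_lemma hd hα hm hb hsolA hsolV hcA hVc hbdA hZV).1 z hz
  -- pass to the limit λ → 1⁻
  have t1 : Filter.Tendsto (fun lam : ℝ => lam ^ c) (nhds 1) (nhds 1) := by
    have h := (Real.continuousAt_rpow_const 1 c (Or.inl one_ne_zero))
    have := h.tendsto
    rwa [Real.one_rpow] at this
  have tz : Filter.Tendsto (fun lam : ℝ => lam * z) (nhds 1) (nhdsWithin z (Set.Ioi 0)) := by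
    rw [tendsto_nhdsWithin_iff]
    constructor
    · have h := ((continuous_id.mul (continuous_const : Continuous fun _ : ℝ => z)).tendsto (1:ℝ))
      simpa [Pi.mul_def] using h
    · filter_upwards [eventually_gt_nhds (by norm_num : (0:ℝ) < 1)] with lam hlam
      exact mul_pos hlam hz
  have t2 : Filter.Tendsto (fun lam : ℝ => B (lam * z)) (nhds 1) (nhds (B z)) :=
    (hcB z hz).tendsto.comp tz
  have t3 : Filter.Tendsto (fun lam : ℝ => lam ^ c * B (lam * z))
      (nhdsWithin 1 (Set.Iio 1)) (nhds (B z)) := by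
    have := t1.mul t2
    rw [one_mul] at this
    exact this.mono_left nhdsWithin_le_nhds
  have hev : ∀ᶠ lam in nhdsWithin 1 (Set.Iio 1), A z ≤ lam ^ c * B (lam * z) := by
    have hpos : ∀ᶠ lam in nhdsWithin (1:ℝ) (Set.Iio 1), 0 < lam :=
      Filter.Eventually.filter_mono nhdsWithin_le_nhds (eventually_gt_nhds (by norm_num))
    filter_upwards [hpos, eventually_mem_nhdsWithin] with lam h0 h1
    exact hstep lam h0 h1
  exact ge_of_tendsto t3 hev

end Final

/-- strict comparison principle in the slow-diffusion range `m > 1` for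
continuous, compactly supported profile solutions. -/
theorem strict_comparison_principle (d : ℕ) (hd : 1 ≤ d) (α m b : ℝ)
    (hα : α ∈ Set.Ioo (0:ℝ) 1)
    (hm : 1 < m)
    (hb : b = α / (2 + (d:ℝ) * (m - 1)))
    (U₁ U₂ : ℝ → ℝ)
    (hsol₁ : IsProfileSolution d α b m U₁) (hsol₂ : IsProfileSolution d α b m U₂)
    (hc₁ : ContinuousOn U₁ (Set.Ioi 0)) (hc₂ : ContinuousOn U₂ (Set.Ioi 0))
    (hbd₁ : Bornology.IsBounded {z : ℝ | 0 < z ∧ U₁ z ≠ 0})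
    (hbd₂ : Bornology.IsBounded {z : ℝ | 0 < z ∧ U₂ z ≠ 0})
    (z₀ : ℝ) (hz₀ : 0 < z₀) (hlt : U₁ z₀ < U₂ z₀) :
    ∀ z, 0 < z → U₁ z < U₂ z ∨ (U₁ z = 0 ∧ U₂ z = 0) := by
  have hU₂pos : 0 < U₂ z₀ := lt_of_le_of_lt (hsol₁.1 z₀ hz₀) hlt
  have h2ne : {z : ℝ | 0 < z ∧ U₂ z ≠ 0}.Nonempty := ⟨z₀, hz₀, hU₂pos.ne'⟩
  rcases Set.eq_empty_or_nonempty {z : ℝ | 0 < z ∧ U₁ z ≠ 0} with h1e | h1ne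
  · -- U₁ vanishes identically on (0,∞)
    intro z hz
    have hU₁z : U₁ z = 0 := by
      by_contra h
      exact absurd (Set.mem_setOf.mpr ⟨hz, h⟩) (h1e ▸ Set.notMem_empty z)
    by_cases hV : U₂ z = 0
    · exact Or.inr ⟨hU₁z, hV⟩
    · exact Or.inl (by rw [hU₁z]; exact lt_of_le_of_ne (hsol₂.1 z hz) (Ne.symm hV))
  · rcases lt_trichotomy (Zedge U₁) (Zedge U₂) with h | h | h
    · -- Z₁ < Z₂ : the conclusion
      obtain ⟨hle, hstrict⟩ :=
        core_lemma hd hα hm hb hsol₁ hsol₂ hc₁ hc₂ hbd₁ h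
      intro z hz
      by_cases hV : U₂ z = 0
      · refine Or.inr ⟨le_antisymm (by rw [← hV]; exact hle z hz) (hsol₁.1 z hz), hV⟩
      · have hzmem : z ∈ {z : ℝ | 0 < z ∧ U₂ z ≠ 0} := ⟨hz, hV⟩
        have hzZ : z ≤ Zedge U₂ := le_csSup hbd₂.bddAbove hzmem
        rcases lt_or_eq_of_le hzZ with hzZ' | hzZ'
        · exact Or.inl (hstrict z hz hzZ')
        · -- z = Zedge U₂ > Zedge U₁, so U₁ z = 0 < U₂ z
          have hU₁z : U₁ z = 0 := zero_after hbd₁ hz (by rw [hzZ']; exact h)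
          refine Or.inl ?_
          rw [hU₁z]
          exact lt_of_le_of_ne (hsol₂.1 z hz) (Ne.symm hV)
    · -- equal edges: U₁ ≡ U₂ on (0,∞), contradicting hlt
      exfalso
      have h21 := edge_le_imp_le hd hα hm hb hsol₂ hsol₁ hc₂ hc₁ hbd₂ hbd₁ h1ne h.ge
      exact absurd (h21 z₀ hz₀) (not_le.mpr hlt)
    · -- Z₂ < Z₁ : then U₂ ≤ U₁ everywhere, contradicting hlt
      exfalso
      obtain ⟨hle, _⟩ := core_lemma hd hα hm hb hsol₂ hsol₁ hc₂ hc₁ hbd₂ h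
      exact absurd (hle z₀ hz₀) (not_le.mpr hlt)
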